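/- Let G=(V,E) be a finite connected simple graph, let H=(V,E_H) with E_H ⊆ E be a connected spanning subgraph of G, and let a, b, c, d ∈ V. Writing spanning-tree and spanning-forest counts in H with superscript H and those in G without, the following inequality of rational numbers holds: ([a|b]^H/[·]^H − [a|b]/[·]) · ([c|d]^H/[·]^H − [c|d]/[·]) ≥ ( ([ad|bc]^H − [ac|bd]^H)/[·]^H − ([ad|bc] − [ac|bd])/[·] )². -/

import Mathlib

open Finset Matrix

open scoped Classical

noncomputable section

/-- The number of connected components of the spanning subgraph `(V, S)` determined by
a set `S` of edges. -/
def kappa (V : Type*) (S : Finset (Sym2 V)) : ℕ :=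
  Nat.card (SimpleGraph.fromEdgeSet (↑S : Set (Sym2 V))).ConnectedComponent

/-- Vertices `a` and `b` lie in the same connected component of the spanning subgraph
`(V, S)`. -/
def EConn {V : Type*} (S : Finset (Sym2 V)) (a b : V) : Prop :=
  (SimpleGraph.fromEdgeSet (↑S : Set (Sym2 V))).Reachable a b

/-- The random-cluster weight `p^|S| (1-p)^(m-|S|) q^{κ(S)}` of an edge subset `S`. -/
def rcWeight {V : Type*} [Fintype V] (G : SimpleGraph V) (p q : ℝ)
    (S : Finset (Sym2 V)) : ℝ :=
  p ^ S.card * (1 - p) ^ (G.edgeFinset.card - S.card) * q ^ kappa V S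

/-- The random-cluster probability of the event `X`, conditioned on all edges of `R`
being present. -/
def rcCondProb {V : Type*} [Fintype V] (G : SimpleGraph V) (p q : ℝ)
    (R : Finset (Sym2 V)) (X : Finset (Sym2 V) → Prop) : ℝ :=
  (∑ S ∈ G.edgeFinset.powerset, if R ⊆ S ∧ X S then rcWeight G p q S else 0) /
    (∑ S ∈ G.edgeFinset.powerset, if R ⊆ S then rcWeight G p q S else 0)

/-- The random-cluster probability of the event `X`. -/
def rcProb {V : Type*} [Fintype V] (G : SimpleGraph V) (p q : ℝ)
    (X : Finset (Sym2 V) → Prop) : ℝ :=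
  rcCondProb G p q ∅ X

/-- The edge set `S` spans a forest (the spanning subgraph `(V, S)` is acyclic). -/
def IsForest {V : Type*} (S : Finset (Sym2 V)) : Prop :=
  (SimpleGraph.fromEdgeSet (↑S : Set (Sym2 V))).IsAcyclic

/-- The arboreal-gas probability of the event `X`, conditioned on all edges of `R`
being present: each spanning forest `F` has probability proportional to `λ^|F|`. -/
def agCondProb {V : Type*} [Fintype V] (G : SimpleGraph V) (lam : ℝ)
    (R : Finset (Sym2 V)) (X : Finset (Sym2 V) → Prop) : ℝ :=
  (∑ S ∈ G.edgeFinset.powerset, if IsForest S ∧ R ⊆ S ∧ X S then lam ^ S.card else 0) /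
    (∑ S ∈ G.edgeFinset.powerset, if IsForest S ∧ R ⊆ S then lam ^ S.card else 0)

/-- The arboreal-gas probability of the event `X`. -/
def agProb {V : Type*} [Fintype V] (G : SimpleGraph V) (lam : ℝ)
    (X : Finset (Sym2 V) → Prop) : ℝ :=
  agCondProb G lam ∅ X

/-- The bunkbed graph of `G`: two copies of `G` joined by all vertical edges. -/
def bunkbed {V : Type*} (G : SimpleGraph V) : SimpleGraph (V × Fin 2) where
  Adj x y := (x.1 = y.1 ∧ x.2 ≠ y.2) ∨ (G.Adj x.1 y.1 ∧ x.2 = y.2)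
  symm := by
    constructor
    rintro ⟨a, i⟩ ⟨b, j⟩ (⟨h1, h2⟩ | ⟨h1, h2⟩)
    · exact Or.inl ⟨h1.symm, h2.symm⟩
    · exact Or.inr ⟨h1.symm, h2.symm⟩
  loopless := by
    constructor
    rintro ⟨a, i⟩ (⟨_, h⟩ | ⟨h, _⟩)
    · exact h rfl
    · exact G.loopless.irrefl a h

/-- The bunkbed graph of `G` with posts `T`: two copies of `G` joined by the vertical
edges at the vertices of `T`. -/
def bunkbedPosts {V : Type*} (G : SimpleGraph V) (T : Finset V) :
    SimpleGraph (V × Fin 2) where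
  Adj x y := (x.1 = y.1 ∧ x.1 ∈ T ∧ x.2 ≠ y.2) ∨ (G.Adj x.1 y.1 ∧ x.2 = y.2)
  symm := by
    constructor
    rintro ⟨a, i⟩ ⟨b, j⟩ (⟨h1, hT, h2⟩ | ⟨h1, h2⟩)
    · exact Or.inl ⟨h1.symm, h1 ▸ hT, h2.symm⟩
    · exact Or.inr ⟨h1.symm, h2.symm⟩
  loopless := by
    constructor
    rintro ⟨a, i⟩ (⟨_, _, h⟩ | ⟨h, _⟩)
    · exact h rfl
    · exact G.loopless.irrefl a h

/-- The vertical (post) edges of the bunkbed graph with posts `T`. -/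
def postEdges {V : Type*} (T : Finset V) : Finset (Sym2 (V × Fin 2)) :=
  T.image (fun t => s((t, (0 : Fin 2)), (t, (1 : Fin 2))))

/-- `[·]`: the number of spanning trees of `G`. -/
def treeCount {V : Type*} [Fintype V] (G : SimpleGraph V) : ℕ :=
  (G.edgeFinset.powerset.filter fun S => IsForest S ∧ kappa V S = 1).card

/-- `[a | b]`: the number of spanning forests of `G` with exactly two connected
components in which `a` and `b` lie in different components. -/
def sepCount {V : Type*} [Fintype V] (G : SimpleGraph V) (a b : V) : ℕ :=
  (G.edgeFinset.powerset.filter fun S =>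
    IsForest S ∧ kappa V S = 2 ∧ ¬ EConn S a b).card

/-- `[a c | b d]`: the number of spanning forests of `G` with exactly two connected
components in which `a, c` lie in one component and `b, d` lie in the other. -/
def sepCount4 {V : Type*} [Fintype V] (G : SimpleGraph V) (a c b d : V) : ℕ :=
  (G.edgeFinset.powerset.filter fun S =>
    IsForest S ∧ kappa V S = 2 ∧ EConn S a c ∧ EConn S b d ∧ ¬ EConn S a b).card

/-- A finite graph is outerplanar if its vertices can be enumerated so that no two
edges cross. -/
def IsOuterplanar {V : Type*} [Fintype V] (G : SimpleGraph V) : Prop :=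
  ∃ e : Fin (Fintype.card V) ≃ V, ∀ i j k l : Fin (Fintype.card V),
    i < j → j < k → k < l → ¬ (G.Adj (e i) (e k) ∧ G.Adj (e j) (e l))

namespace SR

variable {V : Type*}

/-- the spanning subgraph determined by an edge finset -/
abbrev gr (S : Finset (Sym2 V)) : SimpleGraph V := SimpleGraph.fromEdgeSet (↑S : Set (Sym2 V))

lemma econn_refl (S : Finset (Sym2 V)) (a : V) : EConn S a a := SimpleGraph.Reachable.refl a

lemma econn_symm {S : Finset (Sym2 V)} {a b : V} (h : EConn S a b) : EConn S b a := h.symm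

lemma econn_trans {S : Finset (Sym2 V)} {a b c : V} (h : EConn S a b) (h' : EConn S b c) :
    EConn S a c := h.trans h'

lemma econn_mono {S T : Finset (Sym2 V)} (hST : S ⊆ T) {a b : V} (h : EConn S a b) :
    EConn T a b :=
  SimpleGraph.Reachable.mono (SimpleGraph.fromEdgeSet_mono (by exact_mod_cast hST)) h

lemma gr_adj {S : Finset (Sym2 V)} {a b : V} : (gr S).Adj a b ↔ s(a, b) ∈ S ∧ a ≠ b := by
  simp [SimpleGraph.fromEdgeSet_adj]

lemma adj_econn {S : Finset (Sym2 V)} {a b : V} (h : s(a,b) ∈ S) (hab : a ≠ b) : EConn S a b :=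
  (gr_adj.mpr ⟨h, hab⟩).reachable

lemma kappa_eq_one_iff {S : Finset (Sym2 V)} [Nonempty V] :
    kappa V S = 1 ↔ ∀ a b : V, EConn S a b := by
  unfold kappa
  rw [Nat.card_eq_one_iff_unique]
  constructor
  · rintro ⟨hs, -⟩ a b
    exact SimpleGraph.ConnectedComponent.eq.mp
      (hs.elim ((gr S).connectedComponentMk a) ((gr S).connectedComponentMk b))
  · intro h
    refine ⟨⟨fun c d => ?_⟩, ⟨(gr S).connectedComponentMk Classical.ofNonempty⟩⟩
    obtain ⟨a, rfl⟩ := c.exists_rep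
    obtain ⟨b, rfl⟩ := d.exists_rep
    exact SimpleGraph.ConnectedComponent.eq.mpr (h a b)

lemma nonempty_of_kappa_pos {S : Finset (Sym2 V)} (h : 0 < kappa V S) : Nonempty V := by
  unfold kappa at h
  rcases Nat.card_pos_iff.mp h with ⟨⟨c⟩, -⟩
  obtain ⟨a, -⟩ := c.exists_rep
  exact ⟨a⟩

lemma kappa_eq_two_of {S : Finset (Sym2 V)} {p q : V} (hpq : ¬ EConn S p q)
    (hall : ∀ v, EConn S v p ∨ EConn S v q) : kappa V S = 2 := by
  unfold kappa
  rw [Nat.card_eq_two_iff]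
  refine ⟨(gr S).connectedComponentMk p, (gr S).connectedComponentMk q, ?_, ?_⟩
  · intro h
    exact hpq (SimpleGraph.ConnectedComponent.eq.mp h)
  · ext c
    simp only [Set.mem_insert_iff, Set.mem_singleton_iff, Set.mem_univ, iff_true]
    obtain ⟨v, rfl⟩ := c.exists_rep
    rcases hall v with h | h
    · exact Or.inl (SimpleGraph.ConnectedComponent.eq.mpr h)
    · exact Or.inr (SimpleGraph.ConnectedComponent.eq.mpr h)

lemma kappa_two_comps {S : Finset (Sym2 V)} (h2 : kappa V S = 2) {a b : V}
    (hab : ¬ EConn S a b) (v : V) : EConn S v a ∨ EConn S v b := by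
  unfold kappa at h2
  rw [Nat.card_eq_two_iff] at h2
  obtain ⟨x, y, hxy, huniv⟩ := h2
  have hmem : ∀ c : (gr S).ConnectedComponent, c = x ∨ c = y := by
    intro c
    have : c ∈ ({x, y} : Set _) := by rw [huniv]; trivial
    simpa using this
  have hab' : (gr S).connectedComponentMk a ≠ (gr S).connectedComponentMk b := by
    intro h; exact hab (SimpleGraph.ConnectedComponent.eq.mp h)
  rcases hmem ((gr S).connectedComponentMk v) with hv | hv
  · rcases hmem ((gr S).connectedComponentMk a) with ha | ha
    · exact Or.inl (SimpleGraph.ConnectedComponent.eq.mp (hv.trans ha.symm))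
    · rcases hmem ((gr S).connectedComponentMk b) with hb | hb
      · exact Or.inr (SimpleGraph.ConnectedComponent.eq.mp (hv.trans hb.symm))
      · exact absurd (ha.trans hb.symm) hab'
  · rcases hmem ((gr S).connectedComponentMk a) with ha | ha
    · rcases hmem ((gr S).connectedComponentMk b) with hb | hb
      · exact absurd (ha.trans hb.symm) hab'
      · exact Or.inr (SimpleGraph.ConnectedComponent.eq.mp (hv.trans hb.symm))
    · exact Or.inl (SimpleGraph.ConnectedComponent.eq.mp (hv.trans ha.symm))

lemma isForest_subset {S T : Finset (Sym2 V)} (h : S ⊆ T) (hT : IsForest T) : IsForest S := by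
  intro v c hc
  refine hT (c.transfer (gr T) (fun e he => ?_)) (hc.transfer _)
  have h1 : e ∈ (gr S).edgeSet := c.edges_subset_edgeSet he
  rw [SimpleGraph.edgeSet_fromEdgeSet] at h1 ⊢
  exact ⟨by exact_mod_cast h (by exact_mod_cast h1.1), h1.2⟩

lemma gr_erase {S : Finset (Sym2 V)} {e : Sym2 V} :
    gr (S.erase e) = gr S \ SimpleGraph.fromEdgeSet {e} := by
  ext a b
  simp only [SimpleGraph.fromEdgeSet_adj, SimpleGraph.sdiff_adj, Finset.coe_erase,
    Set.mem_diff, Set.mem_singleton_iff, Finset.mem_coe, Finset.mem_erase]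
  tauto

/-- removing a forest edge disconnects its endpoints -/
lemma not_econn_erase {S : Finset (Sym2 V)} (hS : IsForest S) {p q : V}
    (hpq : s(p, q) ∈ S) (hne : p ≠ q) : ¬ EConn (S.erase s(p, q)) p q := by
  have hadj : (gr S).Adj p q := gr_adj.mpr ⟨hpq, hne⟩
  have hbr := (SimpleGraph.isAcyclic_iff_forall_adj_isBridge.mp hS) hadj
  rw [SimpleGraph.isBridge_iff] at hbr
  intro h
  have h2 : (gr (S.erase s(p, q))).Reachable p q := h
  rw [gr_erase] at h2
  exact hbr h2

/-- splitting walks at a possibly-deleted edge -/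
lemma econn_erase_or {S : Finset (Sym2 V)} {p q : V} {v u : V}
    (w : (gr S).Walk v u) : EConn (S.erase s(p, q)) v u ∨
      ((EConn (S.erase s(p, q)) v p ∨ EConn (S.erase s(p, q)) v q) ∧
       (EConn (S.erase s(p, q)) u p ∨ EConn (S.erase s(p, q)) u q)) := by
  induction w with
  | nil => exact Or.inl (econn_refl _ _)
  | @cons v v' u h w ih =>
    by_cases hee : s(v, v') = s(p, q)
    · have hv : v = p ∨ v = q := by
        rcases Sym2.eq_iff.mp hee with ⟨h1, h2⟩ | ⟨h1, h2⟩
        exacts [Or.inl h1, Or.inr h1]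
      have hv' : v' = p ∨ v' = q := by
        rcases Sym2.eq_iff.mp hee with ⟨h1, h2⟩ | ⟨h1, h2⟩
        exacts [Or.inr h2, Or.inl h2]
      have hvside : EConn (S.erase s(p, q)) v p ∨ EConn (S.erase s(p, q)) v q := by
        rcases hv with rfl | rfl
        exacts [Or.inl (econn_refl _ _), Or.inr (econn_refl _ _)]
      refine Or.inr ⟨hvside, ?_⟩
      rcases ih with h1 | h1
      · rcases hv' with rfl | rfl
        exacts [Or.inl (econn_symm h1), Or.inr (econn_symm h1)]
      · exact h1.2
    · have hadj : (gr (S.erase s(p, q))).Adj v v' := by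
        rcases gr_adj.mp h with ⟨hmem, hne⟩
        exact gr_adj.mpr ⟨Finset.mem_erase.mpr ⟨hee, hmem⟩, hne⟩
      rcases ih with h1 | ⟨h1, h2⟩
      · exact Or.inl (econn_trans hadj.reachable h1)
      · exact Or.inr ⟨by
          rcases h1 with h1 | h1
          exacts [Or.inl (econn_trans hadj.reachable h1), Or.inr (econn_trans hadj.reachable h1)], h2⟩

lemma e_notmem_of_cross {S : Finset (Sym2 V)} {p q : V} (hcross : ¬ EConn S p q) :
    s(p, q) ∉ S := by
  intro hmem
  have hne : p ≠ q := fun h => hcross (h ▸ econn_refl _ _)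
  exact hcross (adj_econn hmem hne)

/-- inserting an edge between distinct components keeps a forest a forest -/
lemma isForest_insert {S : Finset (Sym2 V)} (hS : IsForest S) {p q : V}
    (hcross : ¬ EConn S p q) : IsForest (insert s(p, q) S) := by
  have hne : p ≠ q := fun h => hcross (h ▸ econn_refl _ _)
  have hnotmem : s(p, q) ∉ S := e_notmem_of_cross hcross
  intro v c hc
  by_cases he : s(p, q) ∈ c.edges
  · have hadj : (gr (insert s(p, q) S)).Adj p q :=
      gr_adj.mpr ⟨Finset.mem_insert_self _ _, hne⟩
    have hreach : ((gr (insert s(p, q) S)) \ SimpleGraph.fromEdgeSet {s(p, q)}).Reachable p q :=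
      (SimpleGraph.adj_and_reachable_delete_edges_iff_exists_cycle.mpr ⟨v, c, hc, he⟩).2
    rw [← gr_erase] at hreach
    rw [Finset.erase_insert hnotmem] at hreach
    exact hcross hreach
  · refine hS (c.transfer (gr S) (fun e hee => ?_)) (hc.transfer _)
    have h1 : e ∈ (gr (insert s(p, q) S)).edgeSet := c.edges_subset_edgeSet hee
    rw [SimpleGraph.edgeSet_fromEdgeSet] at h1 ⊢
    refine ⟨?_, h1.2⟩
    have h2 : e ∈ insert s(p, q) S := by exact_mod_cast h1.1
    rcases Finset.mem_insert.mp h2 with rfl | h3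
    · exact absurd hee he
    · exact_mod_cast h3
 
/-- inserting a crossing edge into a two-component forest connects everything -/
lemma kappa_insert_eq_one {S : Finset (Sym2 V)} (h2 : kappa V S = 2) {p q : V}
    (hcross : ¬ EConn S p q) : kappa V (insert s(p, q) S) = 1 := by
  have hne : p ≠ q := fun h => hcross (h ▸ econn_refl _ _)
  have : Nonempty V := ⟨p⟩
  rw [kappa_eq_one_iff]
  have hpq' : EConn (insert s(p, q) S) p q := adj_econn (Finset.mem_insert_self _ _) hne
  have hto : ∀ v, EConn (insert s(p, q) S) v p := by
    intro v
    rcases kappa_two_comps h2 hcross v with h | h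
    · exact econn_mono (Finset.subset_insert _ _) h
    · exact econn_trans (econn_mono (Finset.subset_insert _ _) h) (econn_symm hpq')
  intro a b
  exact econn_trans (hto a) (econn_symm (hto b))

/-- removing an edge from a spanning tree gives exactly two components -/
lemma kappa_erase_eq_two {S : Finset (Sym2 V)} (hS : IsForest S) (h1 : kappa V S = 1)
    {p q : V} (hpq : s(p, q) ∈ S) (hne : p ≠ q) : kappa V (S.erase s(p, q)) = 2 := by
  have : Nonempty V := ⟨p⟩
  have hconn := kappa_eq_one_iff.mp h1
  refine kappa_eq_two_of (not_econn_erase hS hpq hne) (fun v => ?_)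
  obtain ⟨w⟩ := hconn v p
  rcases econn_erase_or (p := p) (q := q) w with h | ⟨h, -⟩
  · exact Or.inl h
  · exact h

/-- In a spanning tree, for `v ≠ w` there is a unique neighbour `u` of `w` such that
removing the edge `wu` disconnects `w` from `v`. -/
lemma unique_cut {S : Finset (Sym2 V)} (hS : IsForest S) (h1 : kappa V S = 1)
    {w v : V} (hwv : w ≠ v) :
    ∃! u : V, s(w, u) ∈ S ∧ ¬ EConn (S.erase s(w, u)) w v := by
  have : Nonempty V := ⟨w⟩
  have hconn := kappa_eq_one_iff.mp h1
  obtain ⟨w0⟩ := hconn w v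
  set p := w0.bypass with hp
  have hpath : p.IsPath := w0.bypass_isPath
  -- p is not nil
  cases hq : p with
  | nil => exact absurd rfl hwv
  | @cons _ u _ h q =>
    have hqpath : q.IsPath ∧ w ∉ q.support := by
      have := hq ▸ hpath
      rwa [SimpleGraph.Walk.cons_isPath_iff] at this
    have hwu : w ≠ u := h.ne
    have hmem : s(w, u) ∈ S := (gr_adj.mp h).1
    refine ⟨u, ⟨hmem, ?_⟩, ?_⟩
    · -- removing the first edge of the unique path disconnects
      intro hreach
      obtain ⟨w1⟩ := hreach
      set p1 := w1.bypass
      have hp1 : p1.IsPath := w1.bypass_isPath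
      have hedge : ∀ e ∈ p1.edges, e ∈ (gr S).edgeSet := by
        intro e he
        have h1' : e ∈ (gr (S.erase s(w, u))).edgeSet := p1.edges_subset_edgeSet he
        rw [SimpleGraph.edgeSet_fromEdgeSet] at h1' ⊢
        exact ⟨by exact_mod_cast Finset.erase_subset _ _ (by exact_mod_cast h1'.1), h1'.2⟩
      have hnotin : s(w, u) ∉ p1.edges := by
        intro hin
        have h1' : s(w, u) ∈ (gr (S.erase s(w, u))).edgeSet := p1.edges_subset_edgeSet hin
        rw [SimpleGraph.edgeSet_fromEdgeSet] at h1'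
        have : s(w, u) ∈ S.erase s(w, u) := by exact_mod_cast h1'.1
        exact absurd this (Finset.notMem_erase _ _)
      have hpath2 : (p1.transfer (gr S) hedge).IsPath := hp1.transfer _
      have := hS.path_unique ⟨p1.transfer (gr S) hedge, hpath2⟩ ⟨p, hpath⟩
      have hedges : (p1.transfer (gr S) hedge).edges = p.edges := by
        rw [congrArg (fun z : (gr S).Path w v => (z : (gr S).Walk w v).edges) this]
      have : s(w, u) ∈ (p1.transfer (gr S) hedge).edges := by
        rw [hedges, hq]
        simp
      rw [SimpleGraph.Walk.edges_transfer] at this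
      exact hnotin this
    · -- any other incident edge keeps the connection
      rintro u' ⟨hmem', hncon⟩
      by_contra hne'
      have hne2 : s(w, u') ≠ s(w, u) := by
        intro hh
        exact hne' (Sym2.congr_right.mp hh)
      apply hncon
      refine ⟨p.transfer (gr (S.erase s(w, u'))) ?_⟩
      intro e he
      have h1' : e ∈ (gr S).edgeSet := p.edges_subset_edgeSet he
      rw [SimpleGraph.edgeSet_fromEdgeSet] at h1' ⊢
      refine ⟨?_, h1'.2⟩
      have heS : e ∈ S := by exact_mod_cast h1'.1
      have hene : e ≠ s(w, u') := by
        intro rfl_e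
        subst rfl_e
        rw [hq] at he
        simp only [SimpleGraph.Walk.edges_cons, List.mem_cons] at he
        rcases he with he0 | he1
        · exact hne2 he0
        · exact hqpath.2 (q.fst_mem_support_of_mem_edges he1)
      exact_mod_cast Finset.mem_erase.mpr ⟨hene, heS⟩

variable [Fintype V]

lemma treeCount_pos {G : SimpleGraph V} (hG : G.Connected) : 0 < treeCount G := by
  classical
  have hVne : Nonempty V := hG.nonempty
  set C : Finset (Finset (Sym2 V)) :=
    G.edgeFinset.powerset.filter (fun S => ∀ x y : V, EConn S x y) with hC
  have hCne : C.Nonempty := by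
    refine ⟨G.edgeFinset, Finset.mem_filter.mpr ⟨Finset.mem_powerset_self _, fun x y => ?_⟩⟩
    rw [EConn]
    rw [show ((↑G.edgeFinset : Set (Sym2 V))) = G.edgeSet from SimpleGraph.coe_edgeFinset G,
      SimpleGraph.fromEdgeSet_edgeSet]
    exact hG.preconnected x y
  obtain ⟨S, hSC, hSmin⟩ := C.exists_min_image Finset.card hCne
  rw [hC, Finset.mem_filter, Finset.mem_powerset] at hSC
  obtain ⟨hSsub, hSconn⟩ := hSC
  have hforest : IsForest S := by
    by_contra hnf
    rw [IsForest, SimpleGraph.isAcyclic_iff_forall_edge_isBridge] at hnf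
    push_neg at hnf
    obtain ⟨e, heS, hebr⟩ := hnf
    induction e with
    | _ pp qq =>
      rw [SimpleGraph.edgeSet_fromEdgeSet] at heS
      have hmem : s(pp, qq) ∈ S := by exact_mod_cast heS.1
      have hne : pp ≠ qq := by
        intro hh
        exact heS.2 (by simp [hh])
      have hadj : (gr S).Adj pp qq := gr_adj.mpr ⟨hmem, hne⟩
      rw [SimpleGraph.isBridge_iff] at hebr
      push_neg at hebr
      have hreach : ((gr S) \ SimpleGraph.fromEdgeSet {s(pp, qq)}).Reachable pp qq := hebr
      rw [← gr_erase] at hreach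
      have hSerase : S.erase s(pp, qq) ∈ C := by
        rw [hC, Finset.mem_filter, Finset.mem_powerset]
        refine ⟨(Finset.erase_subset _ _).trans hSsub, fun x y => ?_⟩
        obtain ⟨wxy⟩ := hSconn x y
        rcases econn_erase_or (p := pp) (q := qq) wxy with h | ⟨hx, hy⟩
        · exact h
        · have hx' : EConn (S.erase s(pp, qq)) x pp := by
            rcases hx with h | h
            exacts [h, econn_trans h (econn_symm hreach)]
          have hy' : EConn (S.erase s(pp, qq)) y pp := by
            rcases hy with h | h
            exacts [h, econn_trans h (econn_symm hreach)]
          exact econn_trans hx' (econn_symm hy')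
      have := hSmin _ hSerase
      have hlt : (S.erase s(pp, qq)).card < S.card := Finset.card_erase_lt_of_mem hmem
      omega
  have hS1 : kappa V S = 1 := kappa_eq_one_iff.mpr hSconn
  rw [treeCount]
  rw [Finset.card_pos]
  exact ⟨S, Finset.mem_filter.mpr ⟨Finset.mem_powerset.mpr hSsub, hforest, hS1⟩⟩

/-- spanning trees of `G` -/
def t1 (G : SimpleGraph V) : Finset (Finset (Sym2 V)) :=
  G.edgeFinset.powerset.filter (fun S => IsForest S ∧ kappa V S = 1)

/-- two-component spanning forests of `G` -/
def f2 (G : SimpleGraph V) : Finset (Finset (Sym2 V)) :=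
  G.edgeFinset.powerset.filter (fun S => IsForest S ∧ kappa V S = 2)

/-- the sum of `x` over the component of `w` -/
def comp2 (S : Finset (Sym2 V)) (x : V → ℝ) (w : V) : ℝ :=
  ∑ v ∈ univ.filter (fun v => EConn S w v), x v

lemma comp2_congr {S : Finset (Sym2 V)} {p q : V} (h : EConn S p q) (x : V → ℝ) :
    comp2 S x p = comp2 S x q := by
  unfold comp2
  congr 1
  ext v
  simp only [Finset.mem_filter, Finset.mem_univ, true_and]
  exact ⟨fun h' => econn_trans (econn_symm h) h', fun h' => econn_trans h h'⟩

lemma comp2_add_eq_zero {S : Finset (Sym2 V)} {p q : V} (hdis : ¬ EConn S p q)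
    (hcover : ∀ v, EConn S p v ∨ EConn S q v) (x : V → ℝ) (hx : ∑ v, x v = 0) :
    comp2 S x p + comp2 S x q = 0 := by
  unfold comp2
  have hfil : univ.filter (fun v => EConn S q v) = univ.filter (fun v => ¬ EConn S p v) := by
    ext v
    simp only [Finset.mem_filter, Finset.mem_univ, true_and]
    constructor
    · intro hq hp
      exact hdis (econn_trans hp (econn_symm hq))
    · intro hp
      rcases hcover v with h | h
      exacts [absurd h hp, h]
  rw [hfil, Finset.sum_filter_add_sum_filter_not]
  exact hx

/-- the branch partition lemma for spanning trees -/
lemma branch_sum {S : Finset (Sym2 V)} (hS : IsForest S) (h1 : kappa V S = 1)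
    (x : V → ℝ) (hx : ∑ v, x v = 0) (w : V) :
    ∑ u ∈ univ.filter (fun u => s(w, u) ∈ S), comp2 (S.erase s(w, u)) x w = x w := by
  classical
  set N := univ.filter (fun u => s(w, u) ∈ S) with hN
  have key : ∀ u ∈ N, comp2 (S.erase s(w, u)) x w
      = ∑ v, (if EConn (S.erase s(w, u)) w v then x v else 0) := by
    intro u _
    rw [comp2, Finset.sum_filter]
  rw [Finset.sum_congr rfl key, Finset.sum_comm]
  have keyv : ∀ v ∈ (univ : Finset V),
      (∑ u ∈ N, if EConn (S.erase s(w, u)) w v then x v else 0)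
      = ((N.card : ℝ) - 1) * x v + (if v = w then x v else 0) := by
    intro v _
    have hstep : (∑ u ∈ N, if EConn (S.erase s(w, u)) w v then x v else 0)
        = ((N.filter (fun u => EConn (S.erase s(w, u)) w v)).card : ℝ) * x v := by
      rw [← Finset.sum_filter, Finset.sum_const, nsmul_eq_mul]
    rw [hstep]
    by_cases hvw : v = w
    · have : N.filter (fun u => EConn (S.erase s(w, u)) w v) = N :=
        Finset.filter_true_of_mem (fun u _ => by rw [hvw]; exact econn_refl _ _)
      rw [this, if_pos hvw, hvw]
      ring
    · obtain ⟨u0, ⟨hu0S, hu0n⟩, hu0uniq⟩ := unique_cut hS h1 (Ne.symm hvw)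
      have hu0N : u0 ∈ N := by
        rw [hN, Finset.mem_filter]
        exact ⟨Finset.mem_univ _, hu0S⟩
      have hfil : N.filter (fun u => EConn (S.erase s(w, u)) w v) = N.erase u0 := by
        ext u
        simp only [Finset.mem_filter, Finset.mem_erase]
        constructor
        · rintro ⟨huN, hP⟩
          refine ⟨fun hh => ?_, huN⟩
          subst hh
          exact hu0n hP
        · rintro ⟨hne, huN⟩
          refine ⟨huN, ?_⟩
          by_contra hP
          have huN' : u ∈ univ.filter (fun u => s(w, u) ∈ S) := hN ▸ huN
          exact hne (hu0uniq u ⟨(Finset.mem_filter.mp huN').2, hP⟩)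
      rw [hfil, Finset.card_erase_of_mem hu0N, if_neg hvw,
        Nat.cast_sub (Finset.card_pos.mpr ⟨u0, hu0N⟩), Nat.cast_one, add_zero]
  rw [Finset.sum_congr rfl keyv, Finset.sum_add_distrib, ← Finset.mul_sum, hx, mul_zero,
    zero_add, Finset.sum_ite_eq' univ w x, if_pos (Finset.mem_univ w)]

lemma mem_f2 {G : SimpleGraph V} {F : Finset (Sym2 V)} :
    F ∈ f2 G ↔ F ⊆ G.edgeFinset ∧ IsForest F ∧ kappa V F = 2 := by
  rw [f2, Finset.mem_filter, Finset.mem_powerset]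

lemma mem_t1 {G : SimpleGraph V} {T : Finset (Sym2 V)} :
    T ∈ t1 G ↔ T ⊆ G.edgeFinset ∧ IsForest T ∧ kappa V T = 1 := by
  rw [t1, Finset.mem_filter, Finset.mem_powerset]

lemma ne_of_mem_edgeFinset {G : SimpleGraph V} {p q : V} (h : s(p, q) ∈ G.edgeFinset) :
    p ≠ q := by
  intro hh
  exact SimpleGraph.not_isDiag_of_mem_edgeFinset h (by simp [hh])

lemma tree_forest_bij (G : SimpleGraph V) (f : Finset (Sym2 V) → V × V → ℝ) :
    ∑ F ∈ f2 G, ∑ pq ∈ (univ : Finset (V × V)).filter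
        (fun pq => G.Adj pq.1 pq.2 ∧ ¬ EConn F pq.1 pq.2), f F pq
    = ∑ T ∈ t1 G, ∑ pq ∈ (univ : Finset (V × V)).filter
        (fun pq => s(pq.1, pq.2) ∈ T), f (T.erase s(pq.1, pq.2)) pq := by
  classical
  rw [Finset.sum_sigma', Finset.sum_sigma']
  refine Finset.sum_nbij' (fun a => ⟨insert s(a.2.1, a.2.2) a.1, a.2⟩)
    (fun a => ⟨a.1.erase s(a.2.1, a.2.2), a.2⟩) ?_ ?_ ?_ ?_ ?_
  · rintro ⟨F, pq⟩ ha
    rw [Finset.mem_sigma, Finset.mem_filter] at ha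
    obtain ⟨hF, -, hadj, hcross⟩ := ha
    rw [mem_f2] at hF
    rw [Finset.mem_sigma, Finset.mem_filter]
    refine ⟨mem_t1.mpr ⟨Finset.insert_subset (SimpleGraph.mem_edgeFinset.mpr hadj) hF.1,
      isForest_insert hF.2.1 hcross, kappa_insert_eq_one hF.2.2 hcross⟩,
      Finset.mem_univ _, Finset.mem_insert_self _ _⟩
  · rintro ⟨T, pq⟩ ha
    rw [Finset.mem_sigma, Finset.mem_filter] at ha
    obtain ⟨hT, -, hmem⟩ := ha
    rw [mem_t1] at hT
    have hne : pq.1 ≠ pq.2 := ne_of_mem_edgeFinset (hT.1 hmem)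
    rw [Finset.mem_sigma, Finset.mem_filter]
    refine ⟨mem_f2.mpr ⟨(Finset.erase_subset _ _).trans hT.1,
      isForest_subset (Finset.erase_subset _ _) hT.2.1,
      kappa_erase_eq_two hT.2.1 hT.2.2 hmem hne⟩,
      Finset.mem_univ _, SimpleGraph.mem_edgeFinset.mp (hT.1 hmem), 
      not_econn_erase hT.2.1 hmem hne⟩
  · rintro ⟨F, pq⟩ ha
    rw [Finset.mem_sigma, Finset.mem_filter] at ha
    have : s(pq.1, pq.2) ∉ F := e_notmem_of_cross ha.2.2.2
    simp [Finset.erase_insert this]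
  · rintro ⟨T, pq⟩ ha
    rw [Finset.mem_sigma, Finset.mem_filter] at ha
    simp [Finset.insert_erase ha.2.2]
  · rintro ⟨F, pq⟩ ha
    rw [Finset.mem_sigma, Finset.mem_filter] at ha
    have : s(pq.1, pq.2) ∉ F := e_notmem_of_cross ha.2.2.2
    simp [Finset.erase_insert this]

/-- the unnormalised potential -/
def gpot (G : SimpleGraph V) (x : V → ℝ) (w : V) : ℝ := ∑ F ∈ f2 G, comp2 F x w

/-- the Dirichlet bilinear form (sum over ordered adjacent pairs) -/
def qB (G : SimpleGraph V) (y z : V → ℝ) : ℝ :=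
  ∑ pq ∈ (univ : Finset (V × V)).filter (fun pq => G.Adj pq.1 pq.2),
    (y pq.1 - y pq.2) * (z pq.1 - z pq.2)

lemma treeCount_eq (G : SimpleGraph V) : treeCount G = (t1 G).card := rfl

lemma K1 (G : SimpleGraph V) (x z : V → ℝ) (hx : ∑ v, x v = 0) :
    qB G (gpot G x) z = 4 * (treeCount G : ℝ) * (∑ v, x v * z v) := by
  classical
  rw [qB]
  have step1 : ∀ pq ∈ (univ : Finset (V × V)).filter (fun pq => G.Adj pq.1 pq.2),
      (gpot G x pq.1 - gpot G x pq.2) * (z pq.1 - z pq.2)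
      = ∑ F ∈ f2 G, (comp2 F x pq.1 - comp2 F x pq.2) * (z pq.1 - z pq.2) := by
    intro pq _
    rw [gpot, gpot, ← Finset.sum_sub_distrib, Finset.sum_mul]
  rw [Finset.sum_congr rfl step1, Finset.sum_comm]
  have step2 : ∀ F ∈ f2 G,
      (∑ pq ∈ (univ : Finset (V × V)).filter (fun pq => G.Adj pq.1 pq.2),
        (comp2 F x pq.1 - comp2 F x pq.2) * (z pq.1 - z pq.2))
      = ∑ pq ∈ (univ : Finset (V × V)).filter
          (fun pq => G.Adj pq.1 pq.2 ∧ ¬ EConn F pq.1 pq.2),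
        (comp2 F x pq.1 - comp2 F x pq.2) * (z pq.1 - z pq.2) := by
    intro F _
    refine (Finset.sum_subset (fun pq hpq => ?_) ?_).symm
    · rw [Finset.mem_filter] at hpq ⊢
      exact ⟨hpq.1, hpq.2.1⟩
    intro pq hadj hncross
    rw [Finset.mem_filter] at hadj hncross
    have hconn : EConn F pq.1 pq.2 := by
      by_contra hc
      exact hncross ⟨hadj.1, hadj.2, hc⟩
    rw [comp2_congr hconn, sub_self, zero_mul]
  rw [Finset.sum_congr rfl step2,
    tree_forest_bij G (fun F pq => (comp2 F x pq.1 - comp2 F x pq.2) * (z pq.1 - z pq.2))]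
  have step4 : ∀ T ∈ t1 G,
      (∑ pq ∈ (univ : Finset (V × V)).filter (fun pq => s(pq.1, pq.2) ∈ T),
        (comp2 (T.erase s(pq.1, pq.2)) x pq.1 - comp2 (T.erase s(pq.1, pq.2)) x pq.2)
          * (z pq.1 - z pq.2))
      = 4 * (∑ v, x v * z v) := by
    intro T hT
    rw [mem_t1] at hT
    have : Nonempty V := nonempty_of_kappa_pos (by rw [hT.2.2]; norm_num)
    have hconn := kappa_eq_one_iff.mp hT.2.2
    have hfacts : ∀ pq ∈ (univ : Finset (V × V)).filter (fun pq => s(pq.1, pq.2) ∈ T),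
        comp2 (T.erase s(pq.1, pq.2)) x pq.1 + comp2 (T.erase s(pq.1, pq.2)) x pq.2 = 0 := by
      intro pq hpq
      rw [Finset.mem_filter] at hpq
      have hne : pq.1 ≠ pq.2 := ne_of_mem_edgeFinset (hT.1 hpq.2)
      refine comp2_add_eq_zero (not_econn_erase hT.2.1 hpq.2 hne) (fun v => ?_) x hx
      obtain ⟨wv⟩ := hconn v pq.1
      rcases econn_erase_or (p := pq.1) (q := pq.2) wv with h | ⟨h, -⟩
      · exact Or.inl (econn_symm h)
      · rcases h with h | h
        exacts [Or.inl (econn_symm h), Or.inr (econn_symm h)]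
    have hterm : ∀ pq ∈ (univ : Finset (V × V)).filter (fun pq => s(pq.1, pq.2) ∈ T),
        (comp2 (T.erase s(pq.1, pq.2)) x pq.1 - comp2 (T.erase s(pq.1, pq.2)) x pq.2)
          * (z pq.1 - z pq.2)
        = 2 * comp2 (T.erase s(pq.1, pq.2)) x pq.1 * z pq.1
          + 2 * comp2 (T.erase s(pq.1, pq.2)) x pq.2 * z pq.2 := by
      intro pq hpq
      have := hfacts pq hpq
      linear_combination (-(z pq.1 + z pq.2)) * this
    rw [Finset.sum_congr rfl hterm, Finset.sum_add_distrib]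
    have hswap : (∑ pq ∈ (univ : Finset (V × V)).filter (fun pq => s(pq.1, pq.2) ∈ T),
        2 * comp2 (T.erase s(pq.1, pq.2)) x pq.2 * z pq.2)
        = ∑ pq ∈ (univ : Finset (V × V)).filter (fun pq => s(pq.1, pq.2) ∈ T),
        2 * comp2 (T.erase s(pq.1, pq.2)) x pq.1 * z pq.1 := by
      refine Finset.sum_nbij' Prod.swap Prod.swap ?_ ?_ ?_ ?_ ?_
      · intro pq hpq
        rw [Finset.mem_filter] at hpq ⊢
        exact ⟨Finset.mem_univ _, by rw [Prod.fst_swap, Prod.snd_swap, Sym2.eq_swap]; exact hpq.2⟩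
      · intro pq hpq
        rw [Finset.mem_filter] at hpq ⊢
        exact ⟨Finset.mem_univ _, by rw [Prod.fst_swap, Prod.snd_swap, Sym2.eq_swap]; exact hpq.2⟩
      · intro pq _; simp
      · intro pq _; simp
      · intro pq _
        rw [Prod.fst_swap, Prod.snd_swap, Sym2.eq_swap]
    rw [hswap, ← two_mul]
    have hsplit : (∑ pq ∈ (univ : Finset (V × V)).filter (fun pq => s(pq.1, pq.2) ∈ T),
        2 * comp2 (T.erase s(pq.1, pq.2)) x pq.1 * z pq.1)
        = ∑ p, 2 * z p * (∑ q ∈ univ.filter (fun q => s(p, q) ∈ T),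
            comp2 (T.erase s(p, q)) x p) := by
      rw [Finset.sum_filter, ← Finset.univ_product_univ, Finset.sum_product]
      refine Finset.sum_congr rfl (fun p _ => ?_)
      rw [Finset.mul_sum, Finset.sum_filter]
      refine Finset.sum_congr rfl (fun q _ => ?_)
      split
      · ring
      · ring
    rw [hsplit]
    have hbranch : ∀ p ∈ (univ : Finset V), 2 * z p * (∑ q ∈ univ.filter (fun q => s(p, q) ∈ T),
        comp2 (T.erase s(p, q)) x p) = 2 * z p * x p := by
      intro p _
      rw [branch_sum hT.2.1 hT.2.2 x hx p]
    rw [Finset.sum_congr rfl hbranch]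
    have : (∑ p, 2 * z p * x p) = 2 * ∑ v, x v * z v := by
      rw [Finset.mul_sum]
      exact Finset.sum_congr rfl (fun p _ => by ring)
    rw [this]
    ring
  rw [Finset.sum_congr rfl step4, Finset.sum_const, treeCount_eq, nsmul_eq_mul]
  ring

/-- the forest bilinear form -/
def Phi (G : SimpleGraph V) (x y : V → ℝ) : ℝ := ∑ w, y w * gpot G x w

lemma Phi_eq_sum (G : SimpleGraph V) (x y : V → ℝ) :
    Phi G x y = ∑ F ∈ f2 G, ∑ w, y w * comp2 F x w := by
  rw [Phi]
  have l : ∀ w ∈ (univ : Finset V), y w * gpot G x w = ∑ F ∈ f2 G, y w * comp2 F x w := by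
    intro w _
    rw [gpot, Finset.mul_sum]
  rw [Finset.sum_congr rfl l, Finset.sum_comm]

lemma Phi_symm (G : SimpleGraph V) (x y : V → ℝ) : Phi G x y = Phi G y x := by
  rw [Phi_eq_sum, Phi_eq_sum]
  refine Finset.sum_congr rfl (fun F _ => ?_)
  have l1 : ∀ z t : V → ℝ, (∑ w, t w * comp2 F z w)
      = ∑ w, ∑ v, (if EConn F w v then t w * z v else 0) := by
    intro z t
    refine Finset.sum_congr rfl (fun w _ => ?_)
    rw [comp2, Finset.mul_sum, Finset.sum_filter]
  rw [l1 x y, l1 y x, Finset.sum_comm]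
  refine Finset.sum_congr rfl (fun w _ => Finset.sum_congr rfl (fun v _ => ?_))
  exact if_congr ⟨econn_symm, econn_symm⟩ (mul_comm _ _) rfl

lemma comp2_linear (S : Finset (Sym2 V)) (c1 c2 : ℝ) (x1 x2 : V → ℝ) (w : V) :
    comp2 S (fun v => c1 * x1 v + c2 * x2 v) w = c1 * comp2 S x1 w + c2 * comp2 S x2 w := by
  rw [comp2, comp2, comp2, Finset.mul_sum, Finset.mul_sum, ← Finset.sum_add_distrib]

lemma gpot_linear (G : SimpleGraph V) (c1 c2 : ℝ) (x1 x2 : V → ℝ) (w : V) :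
    gpot G (fun v => c1 * x1 v + c2 * x2 v) w = c1 * gpot G x1 w + c2 * gpot G x2 w := by
  rw [gpot, gpot, gpot, Finset.mul_sum, Finset.mul_sum, ← Finset.sum_add_distrib]
  exact Finset.sum_congr rfl (fun F _ => comp2_linear F c1 c2 x1 x2 w)

lemma Phi_linear (G : SimpleGraph V) (c1 c2 : ℝ) (x1 x2 y : V → ℝ) :
    Phi G (fun v => c1 * x1 v + c2 * x2 v) y = c1 * Phi G x1 y + c2 * Phi G x2 y := by
  rw [Phi, Phi, Phi, Finset.mul_sum, Finset.mul_sum, ← Finset.sum_add_distrib]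
  refine Finset.sum_congr rfl (fun w _ => ?_)
  rw [gpot_linear]
  ring

def uvec (a b : V) : V → ℝ := fun v => (if v = a then 1 else 0) - (if v = b then 1 else 0)

lemma uvec_sum (a b : V) : ∑ v, uvec a b v = 0 := by
  unfold uvec
  rw [Finset.sum_sub_distrib]
  simp [Finset.sum_ite_eq']

lemma comp2_uvec (F : Finset (Sym2 V)) (a b w : V) :
    comp2 F (uvec a b) w
      = (if EConn F w a then (1:ℝ) else 0) - (if EConn F w b then (1:ℝ) else 0) := by
  rw [comp2]
  unfold uvec
  rw [Finset.sum_sub_distrib]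
  congr 1
  · rw [Finset.sum_ite_eq']
    simp
  · rw [Finset.sum_ite_eq']
    simp

lemma perForest {F : Finset (Sym2 V)} (h2 : kappa V F = 2) (a b c d : V) :
    (∑ w, uvec c d w * comp2 F (uvec a b) w)
    = 2 * ((if EConn F a c ∧ EConn F b d ∧ ¬ EConn F a b then (1:ℝ) else 0)
         - (if EConn F a d ∧ EConn F b c ∧ ¬ EConn F a b then (1:ℝ) else 0)) := by
  have hsum : (∑ w, uvec c d w * comp2 F (uvec a b) w)
      = comp2 F (uvec a b) c - comp2 F (uvec a b) d := by
    have l : ∀ w ∈ (univ : Finset V), uvec c d w * comp2 F (uvec a b) w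
        = (if w = c then comp2 F (uvec a b) w else 0)
          - (if w = d then comp2 F (uvec a b) w else 0) := by
      intro w _
      unfold uvec
      split <;> split <;> ring
    rw [Finset.sum_congr rfl l, Finset.sum_sub_distrib, Finset.sum_ite_eq', Finset.sum_ite_eq']
    simp
  rw [hsum, comp2_uvec, comp2_uvec]
  by_cases hab : EConn F a b
  · have hca : EConn F c a ↔ EConn F c b :=
      ⟨fun h => econn_trans h hab, fun h => econn_trans h (econn_symm hab)⟩
    have hda : EConn F d a ↔ EConn F d b :=
      ⟨fun h => econn_trans h hab, fun h => econn_trans h (econn_symm hab)⟩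
    rw [if_congr hca rfl rfl, if_congr hda rfl rfl,
      if_neg (show ¬ (EConn F a c ∧ EConn F b d ∧ ¬ EConn F a b) from fun h => h.2.2 hab),
      if_neg (show ¬ (EConn F a d ∧ EConn F b c ∧ ¬ EConn F a b) from fun h => h.2.2 hab)]
    ring
  · have hcover := kappa_two_comps h2 hab
    rcases hcover c with hc | hc <;> rcases hcover d with hd | hd
    · have hcb : ¬ EConn F c b := fun h => hab (econn_trans (econn_symm hc) h)
      have hdb : ¬ EConn F d b := fun h => hab (econn_trans (econn_symm hd) h)
      rw [if_pos hc, if_neg hcb, if_pos hd, if_neg hdb,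
        if_neg (show ¬ (EConn F a c ∧ EConn F b d ∧ ¬ EConn F a b) from
          fun h => hdb (econn_symm h.2.1)),
        if_neg (show ¬ (EConn F a d ∧ EConn F b c ∧ ¬ EConn F a b) from
          fun h => hcb (econn_symm h.2.1))]
      norm_num
    · have hcb : ¬ EConn F c b := fun h => hab (econn_trans (econn_symm hc) h)
      have hda : ¬ EConn F d a := fun h => hab (econn_trans (econn_symm h) hd)
      rw [if_pos hc, if_neg hcb, if_neg hda, if_pos hd,
        if_pos (show EConn F a c ∧ EConn F b d ∧ ¬ EConn F a b from
          ⟨econn_symm hc, econn_symm hd, hab⟩),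
        if_neg (show ¬ (EConn F a d ∧ EConn F b c ∧ ¬ EConn F a b) from
          fun h => hda (econn_symm h.1))]
      norm_num
    · have hca : ¬ EConn F c a := fun h => hab (econn_trans (econn_symm h) hc)
      have hdb : ¬ EConn F d b := fun h => hab (econn_trans (econn_symm hd) h)
      rw [if_neg hca, if_pos hc, if_pos hd, if_neg hdb,
        if_neg (show ¬ (EConn F a c ∧ EConn F b d ∧ ¬ EConn F a b) from
          fun h => hca (econn_symm h.1)),
        if_pos (show EConn F a d ∧ EConn F b c ∧ ¬ EConn F a b from
          ⟨econn_symm hd, econn_symm hc, hab⟩)]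
      norm_num
    · have hca : ¬ EConn F c a := fun h => hab (econn_trans (econn_symm h) hc)
      have hda : ¬ EConn F d a := fun h => hab (econn_trans (econn_symm h) hd)
      rw [if_neg hca, if_pos hc, if_neg hda, if_pos hd,
        if_neg (show ¬ (EConn F a c ∧ EConn F b d ∧ ¬ EConn F a b) from
          fun h => hca (econn_symm h.1)),
        if_neg (show ¬ (EConn F a d ∧ EConn F b c ∧ ¬ EConn F a b) from
          fun h => hda (econn_symm h.1))]
      norm_num

lemma filter_f2_card (G : SimpleGraph V) (a b c d : V) :
    ((f2 G).filter (fun F => EConn F a c ∧ EConn F b d ∧ ¬ EConn F a b)).card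
      = sepCount4 G a c b d := by
  rw [sepCount4, f2, Finset.filter_filter]
  congr 1
  exact Finset.filter_congr (fun S _ => by tauto)

lemma Phi_uvec (G : SimpleGraph V) (a b c d : V) :
    Phi G (uvec a b) (uvec c d)
      = 2 * (sepCount4 G a c b d : ℝ) - 2 * (sepCount4 G a d b c : ℝ) := by
  rw [Phi_eq_sum]
  have l : ∀ F ∈ f2 G, (∑ w, uvec c d w * comp2 F (uvec a b) w)
      = 2 * (if EConn F a c ∧ EConn F b d ∧ ¬ EConn F a b then (1:ℝ) else 0)
        - 2 * (if EConn F a d ∧ EConn F b c ∧ ¬ EConn F a b then (1:ℝ) else 0) := by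
    intro F hF
    rw [perForest (mem_f2.mp hF).2.2 a b c d]
    ring
  rw [Finset.sum_congr rfl l, Finset.sum_sub_distrib, ← Finset.mul_sum, ← Finset.mul_sum,
    Finset.sum_boole, Finset.sum_boole, ← filter_f2_card G a b c d, ← filter_f2_card G a b d c]

lemma sepCount_eq (G : SimpleGraph V) (a b : V) :
    sepCount G a b = sepCount4 G a a b b := by
  rw [sepCount, sepCount4]
  congr 1
  refine Finset.filter_congr (fun S _ => ?_)
  constructor
  · rintro ⟨h1, h2, h3⟩
    exact ⟨h1, h2, econn_refl _ _, econn_refl _ _, h3⟩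
  · rintro ⟨h1, h2, -, -, h3⟩
    exact ⟨h1, h2, h3⟩

lemma sepCount4_zero (G : SimpleGraph V) (a b : V) : sepCount4 G a b b a = 0 := by
  rw [sepCount4, Finset.card_eq_zero, Finset.filter_eq_empty_iff]
  rintro S - ⟨-, -, h1, -, h2⟩
  exact h2 h1

lemma Phi_uvec_self (G : SimpleGraph V) (a b : V) :
    Phi G (uvec a b) (uvec a b) = 2 * (sepCount G a b : ℝ) := by
  rw [Phi_uvec G a b a b, sepCount_eq G a b, sepCount4_zero]
  norm_num

lemma qB_symm (G : SimpleGraph V) (y z : V → ℝ) : qB G y z = qB G z y := by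
  rw [qB, qB]
  exact Finset.sum_congr rfl (fun pq _ => mul_comm _ _)

lemma qB_self_nonneg (G : SimpleGraph V) (y : V → ℝ) : 0 ≤ qB G y y :=
  Finset.sum_nonneg (fun pq _ => mul_self_nonneg _)

lemma qB_mono {G H : SimpleGraph V} (hHG : H ≤ G) (y : V → ℝ) : qB H y y ≤ qB G y y := by
  refine Finset.sum_le_sum_of_subset_of_nonneg (fun pq hpq => ?_)
    (fun pq _ _ => mul_self_nonneg _)
  rw [Finset.mem_filter] at hpq ⊢
  exact ⟨hpq.1, hHG hpq.2⟩

lemma qB_comb (G : SimpleGraph V) (c1 c2 : ℝ) (y1 y2 z : V → ℝ) :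
    qB G (fun v => c1 * y1 v + c2 * y2 v) z = c1 * qB G y1 z + c2 * qB G y2 z := by
  rw [qB, qB, qB, Finset.mul_sum, Finset.mul_sum, ← Finset.sum_add_distrib]
  exact Finset.sum_congr rfl (fun pq _ => by ring)

lemma qB_comb2 (G : SimpleGraph V) (c1 c2 : ℝ) (y z1 z2 : V → ℝ) :
    qB G y (fun v => c1 * z1 v + c2 * z2 v) = c1 * qB G y z1 + c2 * qB G y z2 := by
  rw [qB, qB, qB, Finset.mul_sum, Finset.mul_sum, ← Finset.sum_add_distrib]
  exact Finset.sum_congr rfl (fun pq _ => by ring)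

/-- the monotonicity of the normalised forest form -/
lemma Phi_mono {G H : SimpleGraph V} (hHG : H ≤ G) (hG : G.Connected) (hH : H.Connected)
    (x : V → ℝ) (hx : ∑ v, x v = 0) :
    Phi G x x / (2 * (treeCount G : ℝ)) ≤ Phi H x x / (2 * (treeCount H : ℝ)) := by
  have htG : (0:ℝ) < (treeCount G : ℝ) := by exact_mod_cast treeCount_pos hG
  have htH : (0:ℝ) < (treeCount H : ℝ) := by exact_mod_cast treeCount_pos hH
  set g := gpot G x with hg
  set h := gpot H x with hh
  set a : ℝ := 4 * (treeCount G : ℝ) with ha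
  set b : ℝ := 4 * (treeCount H : ℝ) with hb
  have hKg : ∀ z, qB G g z = a * (∑ v, x v * z v) := fun z => K1 G x z hx
  have hKh : ∀ z, qB H h z = b * (∑ v, x v * z v) := fun z => K1 H x z hx
  set PG : ℝ := ∑ v, x v * g v with hPG
  set PH : ℝ := ∑ v, x v * h v with hPH
  have hPhiG : Phi G x x = PG := by
    rw [Phi, hPG]
  have hPhiH : Phi H x x = PH := by
    rw [Phi, hPH]
  have hgh : qB H g h = b * PG := by
    rw [qB_symm H g h, hKh g]
  have hhg : qB H h g = b * PG := by
    rw [hKh g]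
  have hhh : qB H h h = b * PH := by
    rw [hKh h]
  -- expand the nonnegative form qB H (b•g - a•h) (b•g - a•h)
  have hexp : qB H (fun v => b * g v + (-a) * h v) (fun v => b * g v + (-a) * h v)
      = b * b * qB H g g - 2 * a * b * (b * PG) + a * a * (b * PH) := by
    rw [qB_comb, qB_comb2, qB_comb2, hgh, hhg, hhh]
    ring
  have hpos := qB_self_nonneg H (fun v => b * g v + (-a) * h v)
  rw [hexp] at hpos
  have hmon : qB H g g ≤ a * PG := by
    rw [← hKg g]
    exact qB_mono hHG g
  have hb0 : 0 < b := by rw [hb]; linarith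
  have ha0 : 0 < a := by rw [ha]; linarith
  have h3 : b * b * qB H g g ≤ b * b * (a * PG) :=
    mul_le_mul_of_nonneg_left hmon (by positivity)
  have key : b * PG ≤ a * PH := by
    nlinarith [hpos, h3, mul_pos ha0 hb0]
  rw [ha, hb] at key
  rw [hPhiG, hPhiH, div_le_div_iff₀ (by linarith) (by linarith)]
  nlinarith [key]

lemma Phi_quad (K : SimpleGraph V) (u w : V → ℝ) (t : ℝ) :
    Phi K (fun v => u v + t * w v) (fun v => u v + t * w v)
      = Phi K u u + 2 * t * Phi K u w + t * t * Phi K w w := by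
  have hy : (fun v => u v + t * w v) = (fun v => 1 * u v + t * w v) := by
    funext v; ring
  rw [hy, Phi_linear K 1 t u w (fun v => 1 * u v + t * w v)]
  rw [Phi_symm K u (fun v => 1 * u v + t * w v), Phi_linear K 1 t u w u]
  rw [Phi_symm K w (fun v => 1 * u v + t * w v), Phi_linear K 1 t u w w]
  rw [Phi_symm K w u]
  ring

lemma half_div (X t : ℝ) (ht : t ≠ 0) : 2 * X / (2 * t) = X / t := by
  field_simp

lemma half_div' (X Y t : ℝ) (ht : t ≠ 0) : (2 * X - 2 * Y) / (2 * t) = (X - Y) / t := by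
  field_simp

end SR

/-- the strengthened Rayleigh inequality for a connected spanning
subgraph `H` of `G`. -/
theorem strong_rayleigh {V : Type*} [Fintype V] (G H : SimpleGraph V)
    (hG : G.Connected) (hHG : H ≤ G) (hH : H.Connected) (a b c d : V) :
    ((sepCount H a b : ℝ) / (treeCount H : ℝ) -
        (sepCount G a b : ℝ) / (treeCount G : ℝ)) *
      ((sepCount H c d : ℝ) / (treeCount H : ℝ) -
        (sepCount G c d : ℝ) / (treeCount G : ℝ)) ≥
    (((sepCount4 H a d b c : ℝ) - (sepCount4 H a c b d : ℝ)) / (treeCount H : ℝ) -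
      ((sepCount4 G a d b c : ℝ) - (sepCount4 G a c b d : ℝ)) / (treeCount G : ℝ)) ^ 2 := by
  classical
  have htG : (0:ℝ) < (treeCount G : ℝ) := by exact_mod_cast SR.treeCount_pos hG
  have htH : (0:ℝ) < (treeCount H : ℝ) := by exact_mod_cast SR.treeCount_pos hH
  set tH : ℝ := (treeCount H : ℝ) with htHd
  set tG : ℝ := (treeCount G : ℝ) with htGd
  have htH0 : tH ≠ 0 := ne_of_gt htH
  have htG0 : tG ≠ 0 := ne_of_gt htG
  set u := SR.uvec a b with hu
  set w := SR.uvec c d with hw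
  have D_nonneg : ∀ x : V → ℝ, (∑ v, x v = 0) →
      0 ≤ SR.Phi H x x / (2 * tH) - SR.Phi G x x / (2 * tG) := by
    intro x hx
    have := SR.Phi_mono hHG hG hH x hx
    linarith
  set A : ℝ := SR.Phi H w w / (2 * tH) - SR.Phi G w w / (2 * tG) with hA
  set B : ℝ := SR.Phi H u w / (2 * tH) - SR.Phi G u w / (2 * tG) with hB
  set C : ℝ := SR.Phi H u u / (2 * tH) - SR.Phi G u u / (2 * tG) with hC
  have hA0 : 0 ≤ A := by
    have h := D_nonneg w (by rw [hw]; exact SR.uvec_sum c d)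
    rw [← hA] at h
    exact h
  have hC0 : 0 ≤ C := by
    have h := D_nonneg u (by rw [hu]; exact SR.uvec_sum a b)
    rw [← hC] at h
    exact h
  have hquad : ∀ t : ℝ, 0 ≤ C + 2 * t * B + t * t * A := by
    intro t
    have hsz : ∑ v, (u v + t * w v) = 0 := by
      rw [Finset.sum_add_distrib, ← Finset.mul_sum, hu, hw, SR.uvec_sum, SR.uvec_sum]
      ring
    have h0 := D_nonneg (fun v => u v + t * w v) hsz
    rw [SR.Phi_quad H u w t, SR.Phi_quad G u w t] at h0
    rw [hC, hB, hA]
    have heq : SR.Phi H u u / (2 * tH) - SR.Phi G u u / (2 * tG)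
        + 2 * t * (SR.Phi H u w / (2 * tH) - SR.Phi G u w / (2 * tG))
        + t * t * (SR.Phi H w w / (2 * tH) - SR.Phi G w w / (2 * tG))
        = (SR.Phi H u u + 2 * t * SR.Phi H u w + t * t * SR.Phi H w w) / (2 * tH)
          - (SR.Phi G u u + 2 * t * SR.Phi G u w + t * t * SR.Phi G w w) / (2 * tG) := by
      ring
    rw [heq]
    exact h0
  have hBsq : B * B ≤ C * A := by
    by_cases hAz : A = 0
    · have hBz : B = 0 := by
        by_contra hBz
        have h1 := hquad (-(C + 1) / (2 * B))
        rw [hAz] at h1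
        have h3 : 0 ≤ C + 2 * (-(C + 1) / (2 * B)) * B := by nlinarith [h1]
        have h2 : 2 * (-(C + 1) / (2 * B)) * B = -(C + 1) := by
          field_simp
        rw [h2] at h3
        linarith
      rw [hBz, hAz]
      norm_num
    · have hApos : 0 < A := lt_of_le_of_ne hA0 (Ne.symm hAz)
      have ht := hquad (-(B / A))
      have hkey : A * (C + 2 * (-(B / A)) * B + (-(B / A)) * (-(B / A)) * A)
          = A * C - B * B := by
        field_simp
        ring
      have h4 := mul_nonneg (le_of_lt hApos) ht
      rw [hkey] at h4
      linarith
  have hCeq : C = (sepCount H a b : ℝ) / tH - (sepCount G a b : ℝ) / tG := by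
    rw [hC, hu, SR.Phi_uvec_self, SR.Phi_uvec_self, SR.half_div _ _ htH0, SR.half_div _ _ htG0]
  have hAeq : A = (sepCount H c d : ℝ) / tH - (sepCount G c d : ℝ) / tG := by
    rw [hA, hw, SR.Phi_uvec_self, SR.Phi_uvec_self, SR.half_div _ _ htH0, SR.half_div _ _ htG0]
  have hBeq : B = ((sepCount4 H a c b d : ℝ) - (sepCount4 H a d b c : ℝ)) / tH
      - ((sepCount4 G a c b d : ℝ) - (sepCount4 G a d b c : ℝ)) / tG := by
    rw [hB, hu, hw, SR.Phi_uvec, SR.Phi_uvec, SR.half_div' _ _ _ htH0, SR.half_div' _ _ _ htG0]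
  have hR : ((sepCount4 H a d b c : ℝ) - (sepCount4 H a c b d : ℝ)) / tH
      - ((sepCount4 G a d b c : ℝ) - (sepCount4 G a c b d : ℝ)) / tG = -B := by
    rw [hBeq]
    ring
  rw [← hCeq, ← hAeq, hR]
  have : (-B) ^ 2 = B * B := by ring
  rw [this]
  exact hBsq
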